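/- Let X1 and X2 be independent random vectors in ℝ^{d1} and ℝ^{d2}, let F_1 : ℝ^{d1} → B_{d1} and F_2 : ℝ^{d2} → B_{d2} be measurable maps into the open unit balls (e.g., the center-outward distribution functions of X1 and X2), and let J_1, J_2 : [0,1) → [0,∞) be score functions, with 𝐉_k(u) := J_k(‖u‖) u/‖u‖ for u ≠ 0 and 𝐉_k(0) := 0. Set Y_k := 𝐉_k(F_k(X_k)), k = 1,2. Then Y_1 and Y_2 are independent and, for any m ≥ 2, any subgroup H of S_m containing equally many even and odd permutations, and any nonnegative measurable kernels f1, f2 with E[f_k(𝐉_k(F_k(X_{k1})),…,𝐉_k(F_k(X_{km})))] < ∞ for independent copies (X_{1i},X_{2i}) of (X1,X2), the rank-based generalized symmetric covariance vanishes: μ_{f1,f2,H}(Y_1, Y_2) = 0. -/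
import Mathlib


open MeasureTheory

/-- Sign-weighted sum of kernel evaluations over a finite set of permutations. -/
noncomputable def permSum {m : ℕ} {E : Type*} (H : Finset (Equiv.Perm (Fin m)))
    (f : (Fin m → E) → ℝ) (x : Fin m → E) : ℝ :=
  ∑ σ ∈ H, ((Equiv.Perm.sign σ : ℤ) : ℝ) * f (fun i => x (σ i))

/-- The dependence kernel `k_{f1,f2,H}`. -/
noncomputable def depKernel {m : ℕ} {E1 E2 : Type*} (H : Finset (Equiv.Perm (Fin m)))
    (f1 : (Fin m → E1) → ℝ) (f2 : (Fin m → E2) → ℝ) (z : Fin m → E1 × E2) : ℝ :=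
  permSum H f1 (fun i => (z i).1) * permSum H f2 (fun i => (z i).2)

/-- The generalized symmetric covariance `μ_{f1,f2,H}` of a joint law `μ` on `E1 × E2`. -/
noncomputable def gsc {m : ℕ} {E1 E2 : Type*} [MeasurableSpace E1] [MeasurableSpace E2]
    (H : Finset (Equiv.Perm (Fin m)))
    (f1 : (Fin m → E1) → ℝ) (f2 : (Fin m → E2) → ℝ) (μ : Measure (E1 × E2)) : ℝ :=
  ∫ z, depKernel H f1 f2 z ∂(Measure.pi fun _ : Fin m => μ)

/-- The radial score map `𝐉(u) = J(‖u‖) u/‖u‖` for `u ≠ 0`, and `𝐉(0) = 0`. -/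
noncomputable def scoreMap {d : ℕ} (J : ℝ → ℝ) (u : EuclideanSpace ℝ (Fin d)) :
    EuclideanSpace ℝ (Fin d) :=
  letI := Classical.propDecidable (u = 0)
  if u = 0 then 0 else (J ‖u‖ / ‖u‖) • u


noncomputable def permME {m : ℕ} {E : Type*} [MeasurableSpace E] (σ : Equiv.Perm (Fin m)) :
    (Fin m → E) ≃ᵐ (Fin m → E) where
  toFun x := fun i => x (σ i)
  invFun x := fun i => x (σ⁻¹ i)
  left_inv x := funext fun i => by simp
  right_inv x := funext fun i => by simp
  measurable_toFun := measurable_pi_iff.mpr fun i => measurable_pi_apply _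
  measurable_invFun := measurable_pi_iff.mpr fun i => measurable_pi_apply _

lemma permMP {m : ℕ} {E : Type*} [MeasurableSpace E] (ν : Measure E) [SigmaFinite ν]
    (σ : Equiv.Perm (Fin m)) :
    MeasurePreserving (permME σ) (Measure.pi fun _ : Fin m => ν)
      (Measure.pi fun _ : Fin m => ν) := by
  constructor
  · exact (permME σ).measurable
  · refine (Measure.pi_eq fun s hs => ?_).symm
    rw [Measure.map_apply (permME σ).measurable (MeasurableSet.univ_pi hs)]
    have hpre : (permME σ) ⁻¹' Set.univ.pi s = Set.univ.pi (fun i => s (σ⁻¹ i)) := by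
      ext x
      simp only [Set.mem_preimage, Set.mem_univ_pi, permME, MeasurableEquiv.coe_mk,
        Equiv.coe_fn_mk]
      constructor
      · intro h i; simpa using h (σ⁻¹ i)
      · intro h i; simpa using h (σ i)
    rw [hpre, Measure.pi_pi]
    exact Equiv.prod_comp σ⁻¹ fun i => ν (s i)

lemma scoreMap_measurable {d : ℕ} {J : ℝ → ℝ} (hJ : Measurable J) :
    Measurable (scoreMap (d := d) J) := by
  unfold scoreMap
  exact Measurable.ite (measurableSet_eq)
    measurable_const (((hJ.comp measurable_norm).div measurable_norm).smul measurable_id)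

lemma sign_sum_zero {m : ℕ} (H : Finset (Equiv.Perm (Fin m)))
    (hH_parity : (H.filter fun σ => Equiv.Perm.sign σ = 1).card
      = (H.filter fun σ => Equiv.Perm.sign σ = -1).card) :
    ∑ σ ∈ H, ((Equiv.Perm.sign σ : ℤ) : ℝ) = 0 := by
  classical
  rw [← Finset.sum_filter_add_sum_filter_not H (fun σ => Equiv.Perm.sign σ = 1)]
  have h1 : ∑ σ ∈ H.filter (fun σ => Equiv.Perm.sign σ = 1),
      ((Equiv.Perm.sign σ : ℤ) : ℝ) = (H.filter fun σ => Equiv.Perm.sign σ = 1).card := by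
    rw [Finset.sum_congr rfl (fun σ hσ => ?_), Finset.sum_const, nsmul_eq_mul, mul_one]
    rw [(Finset.mem_filter.mp hσ).2]; norm_num
  have h2 : ∑ σ ∈ H.filter (fun σ => ¬ Equiv.Perm.sign σ = 1),
      ((Equiv.Perm.sign σ : ℤ) : ℝ)
        = -((H.filter fun σ => Equiv.Perm.sign σ = -1).card : ℝ) := by
    have hfe : H.filter (fun σ => ¬ Equiv.Perm.sign σ = 1)
        = H.filter (fun σ => Equiv.Perm.sign σ = -1) := by
      apply Finset.filter_congr
      intro σ _
      rcases Int.units_eq_one_or (Equiv.Perm.sign σ) with h | h <;> simp [h]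
    rw [hfe, Finset.sum_congr rfl (fun σ hσ => ?_), Finset.sum_const, nsmul_eq_mul, mul_neg_one]
    rw [(Finset.mem_filter.mp hσ).2]; norm_num
  rw [h1, h2, hH_parity]
  ring

lemma integral_permSum_zero {m : ℕ} {E : Type*} [MeasurableSpace E]
    (H : Finset (Equiv.Perm (Fin m)))
    (hH_parity : (H.filter fun σ => Equiv.Perm.sign σ = 1).card
      = (H.filter fun σ => Equiv.Perm.sign σ = -1).card)
    (f : (Fin m → E) → ℝ) (ν : Measure E) [IsProbabilityMeasure ν]
    (hf_int : Integrable f (Measure.pi fun _ : Fin m => ν)) :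
    ∫ x, permSum H f x ∂(Measure.pi fun _ : Fin m => ν) = 0 := by
  unfold permSum
  rw [integral_finset_sum]
  · have hterm : ∀ σ ∈ H, ∫ x, ((Equiv.Perm.sign σ : ℤ) : ℝ) * f (fun i => x (σ i))
        ∂(Measure.pi fun _ : Fin m => ν)
        = ((Equiv.Perm.sign σ : ℤ) : ℝ) * ∫ x, f x ∂(Measure.pi fun _ : Fin m => ν) := by
      intro σ _
      rw [integral_const_mul]
      congr 1
      exact (permMP ν σ).integral_comp' f
    rw [Finset.sum_congr rfl hterm, ← Finset.sum_mul, sign_sum_zero H hH_parity, zero_mul]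
  · intro σ _
    refine Integrable.const_mul ?_ _
    exact ((permMP ν σ).integrable_comp_emb (permME σ).measurableEmbedding).mpr hf_int

/-- if `X1 ⟂ X2` (joint law `μ1 ⊗ μ2`), `F_k` are measurable maps into the
open unit balls, and `J_k` are score functions, then `Y_1 := 𝐉_1(F_1(X_1))` and
`Y_2 := 𝐉_2(F_2(X_2))` are independent (the joint law of `(Y1, Y2)` is the product of its
marginals) and, for any subgroup `H ⊆ S_m` with equally many even and odd permutations and
nonnegative measurable kernels with finite expectations, the rank-based GSC vanishes:
`μ_{f1,f2,H}(Y1, Y2) = 0`. -/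
theorem rank_gsc_eq_zero_of_indep {d1 d2 m : ℕ} (hm : 2 ≤ m)
    (H : Finset (Equiv.Perm (Fin m)))
    (hH_one : (1 : Equiv.Perm (Fin m)) ∈ H)
    (hH_mul : ∀ σ ∈ H, ∀ τ ∈ H, σ * τ ∈ H)
    (hH_inv : ∀ σ ∈ H, σ⁻¹ ∈ H)
    (hH_parity : (H.filter fun σ => Equiv.Perm.sign σ = 1).card
      = (H.filter fun σ => Equiv.Perm.sign σ = -1).card)
    (f1 : (Fin m → EuclideanSpace ℝ (Fin d1)) → ℝ)
    (f2 : (Fin m → EuclideanSpace ℝ (Fin d2)) → ℝ)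
    (hf1_meas : Measurable f1) (hf2_meas : Measurable f2)
    (hf1_nonneg : ∀ x, 0 ≤ f1 x) (hf2_nonneg : ∀ x, 0 ≤ f2 x)
    -- the marginal laws of the independent pair (X1, X2)
    (μ1 : Measure (EuclideanSpace ℝ (Fin d1))) (μ2 : Measure (EuclideanSpace ℝ (Fin d2)))
    [IsProbabilityMeasure μ1] [IsProbabilityMeasure μ2]
    -- measurable maps into the open unit balls (e.g. center-outward distribution functions)
    (F1 : EuclideanSpace ℝ (Fin d1) → EuclideanSpace ℝ (Fin d1)) (hF1_meas : Measurable F1)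
    (hF1_ball : ∀ x, ‖F1 x‖ < 1)
    (F2 : EuclideanSpace ℝ (Fin d2) → EuclideanSpace ℝ (Fin d2)) (hF2_meas : Measurable F2)
    (hF2_ball : ∀ x, ‖F2 x‖ < 1)
    -- score functions
    (J1 J2 : ℝ → ℝ) (hJ1_meas : Measurable J1) (hJ2_meas : Measurable J2)
    (hJ1_nonneg : ∀ u ∈ Set.Ico (0 : ℝ) 1, 0 ≤ J1 u)
    (hJ2_nonneg : ∀ u ∈ Set.Ico (0 : ℝ) 1, 0 ≤ J2 u)
    -- finite expectations of the kernels evaluated at the scored ranks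
    (hf1_int : Integrable (fun x : Fin m → EuclideanSpace ℝ (Fin d1)
      => f1 (fun i => scoreMap J1 (F1 (x i)))) (Measure.pi fun _ : Fin m => μ1))
    (hf2_int : Integrable (fun x : Fin m → EuclideanSpace ℝ (Fin d2)
      => f2 (fun i => scoreMap J2 (F2 (x i)))) (Measure.pi fun _ : Fin m => μ2)) :
    ((μ1.prod μ2).map fun z => (scoreMap J1 (F1 z.1), scoreMap J2 (F2 z.2)))
        = (μ1.map fun x => scoreMap J1 (F1 x)).prod (μ2.map fun x => scoreMap J2 (F2 x))
    ∧ gsc H f1 f2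
        ((μ1.prod μ2).map fun z => (scoreMap J1 (F1 z.1), scoreMap J2 (F2 z.2))) = 0 := by
    classical
  set g1 := fun x => scoreMap J1 (F1 x) with hg1_def
  set g2 := fun x => scoreMap J2 (F2 x) with hg2_def
  have hg1 : Measurable g1 := (scoreMap_measurable hJ1_meas).comp hF1_meas
  have hg2 : Measurable g2 := (scoreMap_measurable hJ2_meas).comp hF2_meas
  have hmap : ((μ1.prod μ2).map fun z => (g1 z.1, g2 z.2))
      = (μ1.map g1).prod (μ2.map g2) := by
    rw [Measure.map_prod_map μ1 μ2 hg1 hg2]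
    rfl
  refine ⟨hmap, ?_⟩
  rw [hmap]
  set ν1 := μ1.map g1 with hν1_def
  set ν2 := μ2.map g2 with hν2_def
  have hpν1 : IsProbabilityMeasure ν1 := Measure.isProbabilityMeasure_map hg1.aemeasurable
  have hpν2 : IsProbabilityMeasure ν2 := Measure.isProbabilityMeasure_map hg2.aemeasurable
  -- integrability of f1 w.r.t. pi ν1
  have hmp1 : MeasurePreserving (fun x : Fin m → EuclideanSpace ℝ (Fin d1) => fun i => g1 (x i))
      (Measure.pi fun _ : Fin m => μ1) (Measure.pi fun _ : Fin m => ν1) :=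
    measurePreserving_pi _ _ (fun _ => ⟨hg1, rfl⟩)
  have hint1 : Integrable f1 (Measure.pi fun _ : Fin m => ν1) := by
    rw [← hmp1.map_eq, integrable_map_measure hf1_meas.aestronglyMeasurable
      hmp1.measurable.aemeasurable]
    exact hf1_int
  -- factorize the integral
  unfold gsc depKernel
  have hmpA := measurePreserving_arrowProdEquivProdArrow
    (EuclideanSpace ℝ (Fin d1)) (EuclideanSpace ℝ (Fin d2)) (Fin m)
    (fun _ => ν1) (fun _ => ν2)
  have hfac : ∫ z, permSum H f1 (fun i => (z i).1) * permSum H f2 (fun i => (z i).2)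
      ∂(Measure.pi fun _ : Fin m => ν1.prod ν2)
      = ∫ w, permSum H f1 w.1 * permSum H f2 w.2
        ∂((Measure.pi fun _ : Fin m => ν1).prod (Measure.pi fun _ : Fin m => ν2)) := by
    rw [← hmpA.map_eq, integral_map hmpA.measurable.aemeasurable]
    · rfl
    · apply Measurable.aestronglyMeasurable
      apply Measurable.mul
      · apply Measurable.comp (g := permSum H f1)
        · unfold permSum
          exact Finset.measurable_sum _ fun σ _ => (hf1_meas.comp
            (measurable_pi_iff.mpr fun i => measurable_pi_apply (σ i))).const_mul _
        · exact measurable_fst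
      · apply Measurable.comp (g := permSum H f2)
        · unfold permSum
          exact Finset.measurable_sum _ fun σ _ => (hf2_meas.comp
            (measurable_pi_iff.mpr fun i => measurable_pi_apply (σ i))).const_mul _
        · exact measurable_snd
  rw [hfac, integral_prod_mul (μ := Measure.pi fun _ : Fin m => ν1)
    (ν := Measure.pi fun _ : Fin m => ν2) (permSum H f1) (permSum H f2)]
  rw [integral_permSum_zero H hH_parity f1 ν1 hint1, zero_mul]
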